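/- Let V and W be finite-dimensional vector spaces over the complex numbers, let g : V → W be a linear map, and let k be a natural number such that dim(g(V)) > k. Let {V_i}_{i ∈ I} be a family of linear subspaces of V such that the union ⋃_{i ∈ I} V_i spans V, and such that for any pair (i, j) ∈ I × I with i ≠ j there is a finite sequence i_1 = i, i_2, …, i_{t−1}, i_t = j of pairwise distinct elements of I with dim(g(V_{i_h} ∩ V_{i_{h+1}})) ≥ k for all h ∈ {1, …, t−1}. Then there exists an index i ∈ I such that dim(g(V_i)) > k. -/
import Mathlib


/-- **Lemma (CL, Lemma (3.1))**: Let `g : V → W` be a linear map of finite-dimensional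
complex vector spaces with `dim (g V) > k`. Let `{V_i}` be a family of subspaces of `V`
whose union spans `V`, such that any two distinct indices `i ≠ j` are connected by a
finite sequence of pairwise distinct indices along which consecutive subspaces satisfy
`dim (g (V_i ∩ V_j)) ≥ k`. Then some `V_i` satisfies `dim (g V_i) > k`. -/
theorem stmt0 {V W : Type*} [AddCommGroup V] [Module ℂ V] [AddCommGroup W] [Module ℂ W]
    [FiniteDimensional ℂ V] [FiniteDimensional ℂ W]
    (g : V →ₗ[ℂ] W) (k : ℕ) (hg : k < Module.finrank ℂ (LinearMap.range g))
    {I : Type*} (Vs : I → Submodule ℂ V) (hspan : ⨆ i, Vs i = ⊤)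
    (hchain : ∀ i j : I, i ≠ j → ∃ t : ℕ, ∃ c : Fin (t + 2) → I,
      Function.Injective c ∧ c 0 = i ∧ c (Fin.last (t + 1)) = j ∧
      ∀ h : Fin (t + 1),
        k ≤ Module.finrank ℂ ((Vs (c h.castSucc) ⊓ Vs (c h.succ)).map g)) :
    ∃ i : I, k < Module.finrank ℂ ((Vs i).map g) := by
  by_contra hcon
  push_neg at hcon
  have hrange : LinearMap.range g = (⊤ : Submodule ℂ V).map g := LinearMap.range_eq_map g
  cases isEmpty_or_nonempty I with
  | inl hI =>
    have hbot : (⊤ : Submodule ℂ V) = ⊥ := by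
      rw [← hspan]; exact iSup_of_empty _
    rw [hrange, hbot, Submodule.map_bot, finrank_bot] at hg
    exact Nat.not_lt_zero k hg
  | inr hI =>
    -- key step: adjacent indices in a chain have equal images
    have step : ∀ a b : I, k ≤ Module.finrank ℂ ((Vs a ⊓ Vs b).map g) →
        (Vs a).map g = (Vs b).map g := by
      intro a b hk
      have ea : (Vs a ⊓ Vs b).map g = (Vs a).map g :=
        Submodule.eq_of_le_of_finrank_le (Submodule.map_mono inf_le_left)
          (le_trans (hcon a) hk)
      have eb : (Vs a ⊓ Vs b).map g = (Vs b).map g :=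
        Submodule.eq_of_le_of_finrank_le (Submodule.map_mono inf_le_right)
          (le_trans (hcon b) hk)
      rw [← ea, eb]
    obtain ⟨i0⟩ := id hI
    have hall : ∀ i : I, (Vs i).map g = (Vs i0).map g := by
      intro i
      by_cases hii : i = i0
      · rw [hii]
      · obtain ⟨t, c, -, hc0, hcl, hadj⟩ := hchain i0 i (Ne.symm hii)
        have key : ∀ n : Fin (t + 2), (Vs (c 0)).map g = (Vs (c n)).map g := by
          intro n
          induction n using Fin.induction with
          | zero => rfl
          | succ m ih => exact ih.trans (step _ _ (hadj m))
        have := key (Fin.last (t + 1))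
        rw [hc0, hcl] at this
        exact this.symm
    have : LinearMap.range g = (Vs i0).map g := by
      rw [hrange, ← hspan, Submodule.map_iSup]
      simp_rw [hall]
      exact iSup_const
    rw [this] at hg
    exact absurd (hcon i0) (not_le.mpr hg)
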